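/- There exists a constant C > 0 such that for all integers m, n with 2 ≤ m ≤ n and every configuration A of the m × n Torus Puzzle, there is a finite sequence of at most C · m · n · ⌈log₂ n⌉ unit rotations whose application to A produces a configuration in which every column is near-full. -/

import Mathlib

/- Unit rightward rotation of row i of the m x n Torus Puzzle. -/
def rowRot (m n : ℕ) (i : Fin m) : Equiv.Perm (Fin m × Fin n) where
  toFun p := if p.1 = i then (i, finRotate n p.2) else p
  invFun p := if p.1 = i then (i, (finRotate n).symm p.2) else p
  left_inv := by rintro ⟨a, b⟩; by_cases h : a = i <;> simp [h, -finRotate_apply, -finRotate_symm_apply]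
  right_inv := by rintro ⟨a, b⟩; by_cases h : a = i <;> simp [h, -finRotate_apply, -finRotate_symm_apply]

/- Unit downward rotation of column j of the m x n Torus Puzzle. -/
def colRot (m n : ℕ) (j : Fin n) : Equiv.Perm (Fin m × Fin n) where
  toFun p := if p.2 = j then (finRotate m p.1, j) else p
  invFun p := if p.2 = j then ((finRotate m).symm p.1, j) else p
  left_inv := by rintro ⟨a, b⟩; by_cases h : b = j <;> simp [h, -finRotate_apply, -finRotate_symm_apply]
  right_inv := by rintro ⟨a, b⟩; by_cases h : b = j <;> simp [h, -finRotate_apply, -finRotate_symm_apply]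

/- The set S(m,n) of the m + n unit rotations. -/
def unitRotations (m n : ℕ) : Set (Equiv.Perm (Fin m × Fin n)) :=
  Set.range (rowRot m n) ∪ Set.range (colRot m n)

/- Applying a unit rotation g to a configuration A yields A ∘ g⁻¹. -/
def applyRot {m n : ℕ} (A : (Fin m × Fin n) ≃ Fin (m * n))
    (g : Equiv.Perm (Fin m × Fin n)) : (Fin m × Fin n) ≃ Fin (m * n) :=
  g.symm.trans A

/- Applying a finite sequence of rotations, one after another (left to right). -/
def applySeq {m n : ℕ} (A : (Fin m × Fin n) ≃ Fin (m * n))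
    (L : List (Equiv.Perm (Fin m × Fin n))) : (Fin m × Fin n) ≃ Fin (m * n) :=
  L.foldl applyRot A

/- Column j is near-full: every element in the body of column j has target column j. -/
def NearFull {m n : ℕ} (A : (Fin m × Fin n) ≃ Fin (m * n)) (j : Fin n) : Prop :=
  ∀ i : Fin m, 1 ≤ (i : ℕ) → (A (i, j) : ℕ) % n = (j : ℕ)

/- The body of column j contains exactly the elements with target column j and target row ≥ 1. -/
def BodyOfColumnIsFull {m n : ℕ} (A : (Fin m × Fin n) ≃ Fin (m * n)) (j : Fin n) : Prop :=
  ∀ v : Fin (m * n),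
    (∃ i : Fin m, 1 ≤ (i : ℕ) ∧ A (i, j) = v) ↔ ((v : ℕ) % n = (j : ℕ) ∧ 1 ≤ (v : ℕ) / n)

/- Column j is body-sorted: every element of the body of column j is in its target position. -/
def BodySorted {m n : ℕ} (A : (Fin m × Fin n) ≃ Fin (m * n)) (j : Fin n) : Prop :=
  ∀ i : Fin m, 1 ≤ (i : ℕ) → (A (i, j) : ℕ) = (i : ℕ) * n + (j : ℕ)

/- FillColumns: O(m n log n) unit rotations make all columns near-full. -/
set_option linter.unusedSectionVars false

namespace FillCols
open Finset
open Fin.NatCast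

noncomputable local instance (priority := low) {α : Sort _} (P : α → Prop) :
    DecidablePred P := Classical.decPred P

abbrev Cfg (m n : ℕ) := (Fin m × Fin n) ≃ Fin (m * n)

section
variable {m n : ℕ} [NeZero m] [NeZero n]

lemma fr_val {k : ℕ} [NeZero k] (x : Fin k) : (finRotate k x).val = (x.val + 1) % k := by
  obtain ⟨k', rfl⟩ := Nat.exists_eq_succ_of_ne_zero (NeZero.ne k)
  rw [finRotate_succ_apply, Fin.val_add]
  have : (1 : Fin (k' + 1)).val = 1 % (k' + 1) := by
    rcases k' with _ | k'' <;> rfl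
  rw [this, Nat.add_mod, Nat.mod_mod_of_dvd _ dvd_rfl, ← Nat.add_mod]

lemma fr_eq {k : ℕ} [NeZero k] (x y : Fin k) (h : (x.val + 1) % k = y.val) :
    finRotate k x = y := by
  apply Fin.ext; rw [fr_val]; exact h

lemma fr_symm_eq {k : ℕ} [NeZero k] (x y : Fin k) (h : (y.val + 1) % k = x.val) :
    (finRotate k).symm x = y := by
  rw [Equiv.symm_apply_eq]; exact (fr_eq y x h).symm

lemma rowRot_symm_apply (i : Fin m) (p : Fin m × Fin n) :
    (rowRot m n i).symm p = if p.1 = i then (i, (finRotate n).symm p.2) else p := rfl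

lemma colRot_symm_apply (j : Fin n) (p : Fin m × Fin n) :
    (colRot m n j).symm p = if p.2 = j then ((finRotate m).symm p.1, j) else p := rfl

lemma rowRot_apply' (i : Fin m) (p : Fin m × Fin n) :
    rowRot m n i p = if p.1 = i then (i, finRotate n p.2) else p := rfl

lemma colRot_apply' (j : Fin n) (p : Fin m × Fin n) :
    colRot m n j p = if p.2 = j then (finRotate m p.1, j) else p := rfl

-- step operations
def stepR (A : Cfg m n) : Cfg m n := applyRot A (rowRot m n 0)
def stepC (A : Cfg m n) (j : Fin n) : Cfg m n := applyRot A (colRot m n j)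

lemma applyRot_apply (A : Cfg m n) (g : Equiv.Perm (Fin m × Fin n)) (p : Fin m × Fin n) :
    applyRot A g p = A (g.symm p) := rfl

lemma applyRot_symm_apply (A : Cfg m n) (g : Equiv.Perm (Fin m × Fin n)) (v : Fin (m * n)) :
    (applyRot A g).symm v = g (A.symm v) := by
  simp [applyRot]

-- contents lemmas
lemma stepR_content (A : Cfg m n) (i : Fin m) (j : Fin n) (hi : i ≠ 0) :
    stepR A (i, j) = A (i, j) := by
  simp [stepR, applyRot_apply, rowRot_symm_apply, hi]

lemma stepR_content0 (A : Cfg m n) (j : Fin n) :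
    stepR A (0, j) = A (0, (finRotate n).symm j) := by
  simp [stepR, applyRot_apply, rowRot_symm_apply]

lemma stepC_content_ne (A : Cfg m n) (j : Fin n) (i : Fin m) (j' : Fin n) (h : j' ≠ j) :
    stepC A j (i, j') = A (i, j') := by
  simp [stepC, applyRot_apply, colRot_symm_apply, h]

lemma stepC_content (A : Cfg m n) (j : Fin n) (i : Fin m) :
    stepC A j (i, j) = A ((finRotate m).symm i, j) := by
  simp [stepC, applyRot_apply, colRot_symm_apply]

-- position lemmas
lemma stepR_pos (A : Cfg m n) (v : Fin (m * n)) :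
    (stepR A).symm v = rowRot m n 0 (A.symm v) := applyRot_symm_apply _ _ _

lemma stepC_pos (A : Cfg m n) (j : Fin n) (v : Fin (m * n)) :
    (stepC A j).symm v = colRot m n j (A.symm v) := applyRot_symm_apply _ _ _

lemma rowRot_apply_ne (i : Fin m) (p : Fin m × Fin n) (h : p.1 ≠ i) :
    rowRot m n i p = p := by simp [rowRot, h]

lemma rowRot_apply_eq (i : Fin m) (c : Fin n) :
    rowRot m n i (i, c) = (i, finRotate n c) := by simp [rowRot]

lemma colRot_apply_ne (j : Fin n) (p : Fin m × Fin n) (h : p.2 ≠ j) :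
    colRot m n j p = p := by simp [colRot, h]

lemma colRot_apply_eq (j : Fin n) (i : Fin m) :
    colRot m n j (i, j) = (finRotate m i, j) := by simp [colRot]


-- ## predicates and potential

def Good (A : Cfg m n) (i : Fin m) (j : Fin n) : Prop := (A (i, j)).val % n = j.val

def PFX (A : Cfg m n) (j : Fin n) (k : ℕ) : Prop :=
  ∀ i : Fin m, 1 ≤ i.val → i.val ≤ k → Good A i j

noncomputable def pref (A : Cfg m n) (j : Fin n) : ℕ :=
  @Nat.findGreatest (PFX A j) (Classical.decPred _) (m - 1)

lemma PFX_zero (A : Cfg m n) (j : Fin n) : PFX A j 0 := by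
  intro i h1 h0; omega

lemma pref_le (A : Cfg m n) (j : Fin n) : pref A j ≤ m - 1 :=
  Nat.findGreatest_le _

lemma pfx_pref (A : Cfg m n) (j : Fin n) : PFX A j (pref A j) :=
  Nat.findGreatest_spec (Nat.zero_le _) (PFX_zero A j)

lemma le_pref {A : Cfg m n} {j : Fin n} {k : ℕ} (hk : k ≤ m - 1) (h : PFX A j k) :
    k ≤ pref A j :=
  Nat.le_findGreatest hk h

lemma pref_lt_not {A : Cfg m n} {j : Fin n} {k : ℕ} (h1 : pref A j < k) (h2 : k ≤ m - 1) :
    ¬ PFX A j k :=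
  Nat.findGreatest_is_greatest h1 h2

lemma pref_congr {A B : Cfg m n} {j j' : Fin n}
    (h : ∀ k, PFX A j k ↔ PFX B j' k) : pref A j = pref B j' := by
  apply le_antisymm
  · exact le_pref (pref_le A j) ((h _).1 (pfx_pref A j))
  · exact le_pref (pref_le B j') ((h _).2 (pfx_pref B j'))

def IsFull (A : Cfg m n) (j : Fin n) : Prop := pref A j = m - 1

lemma isFull_iff (A : Cfg m n) (j : Fin n) :
    IsFull A j ↔ ∀ i : Fin m, 1 ≤ i.val → Good A i j := by
  constructor
  · intro h i h1
    exact pfx_pref A j i h1 (by rw [h]; omega)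
  · intro h
    exact le_antisymm (pref_le A j) (le_pref le_rfl fun i h1 _ => h i h1)

def Insertable (A : Cfg m n) (j : Fin n) : Prop := Good A 0 j ∧ ¬ IsFull A j

noncomputable def Rm (A : Cfg m n) : ℕ := ∑ j : Fin n, (m - 1 - pref A j)

-- ## effect of steps on Good / pref

lemma stepR_good (A : Cfg m n) (i : Fin m) (j : Fin n) (hi : 1 ≤ i.val) :
    Good (stepR A) i j ↔ Good A i j := by
  unfold Good
  rw [stepR_content A i j (by intro h; rw [h] at hi; simp at hi)]

lemma stepR_pref (A : Cfg m n) (j : Fin n) : pref (stepR A) j = pref A j := by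
  apply pref_congr
  intro k
  constructor <;> intro h i h1 h2
  · exact (stepR_good A i j h1).1 (h i h1 h2)
  · exact (stepR_good A i j h1).2 (h i h1 h2)

lemma stepC_pref_ne (A : Cfg m n) (j j' : Fin n) (h : j' ≠ j) :
    pref (stepC A j) j' = pref A j' := by
  apply pref_congr
  intro k
  unfold PFX Good
  rw [forall_congr' fun i => ?_]
  rw [stepC_content_ne A j i j' h]

lemma prevRow (hm : 2 ≤ m) (i : Fin m) (hi : 1 ≤ i.val) :
    (finRotate m).symm i = ⟨i.val - 1, by omega⟩ := by
  apply fr_symm_eq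
  simp only []
  have : i.val < m := i.isLt
  have : i.val - 1 + 1 = i.val := by omega
  rw [this, Nat.mod_eq_of_lt i.isLt]

lemma stepC_good (A : Cfg m n) (hm : 2 ≤ m) (j : Fin n) (i : Fin m) (hi : 1 ≤ i.val) :
    (Good (stepC A j) i j ↔ Good A ⟨i.val - 1, by omega⟩ j) := by
  unfold Good
  rw [stepC_content A j i, prevRow hm i hi]

lemma zeroRow (hm : 2 ≤ m) : ((⟨0, by omega⟩ : Fin m) = (0 : Fin m)) := rfl

lemma stepC_pref (A : Cfg m n) (hm : 2 ≤ m) (j : Fin n) (hIns : Insertable A j) :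
    pref (stepC A j) j = pref A j + 1 := by
  set p := pref A j with hp
  have hple : p ≤ m - 1 := pref_le A j
  have hplt : p < m - 1 := lt_of_le_of_ne hple hIns.2
  apply le_antisymm
  · by_contra hgt
    push_neg at hgt
    have hq : p + 1 < pref (stepC A j) j := hgt
    have hqle : pref (stepC A j) j ≤ m - 1 := pref_le _ _
    have hPFX' : PFX (stepC A j) j (pref (stepC A j) j) := pfx_pref _ _
    -- derive PFX A j (p+1), contradiction
    apply pref_lt_not (lt_add_one p) (by omega)
    intro i h1 h2
    have hi1 : i.val + 1 < m := by omega
    have := hPFX' ⟨i.val + 1, hi1⟩ (by simp) (by simp; omega)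
    rw [stepC_good A hm j ⟨i.val + 1, hi1⟩ (by simp)] at this
    simpa using this
  · apply le_pref (by omega)
    intro i h1 h2
    rw [stepC_good A hm j i h1]
    rcases Nat.eq_or_lt_of_le h1 with h | h
    · have : (⟨i.val - 1, by omega⟩ : Fin m) = 0 := by
        apply Fin.ext; simp; omega
      rw [this]; exact hIns.1
    · exact pfx_pref A j ⟨i.val - 1, by omega⟩ (by simp; omega) (by simp; omega)

-- ## Rm accounting

lemma Rm_stepR (A : Cfg m n) : Rm (stepR A) = Rm A := by
  unfold Rm
  exact Finset.sum_congr rfl fun j _ => by rw [stepR_pref]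

lemma Rm_stepC (A : Cfg m n) (hm : 2 ≤ m) (j : Fin n) (hIns : Insertable A j) :
    Rm (stepC A j) + 1 = Rm A := by
  unfold Rm
  rw [← Finset.sum_erase_add _ _ (Finset.mem_univ j),
      ← Finset.sum_erase_add _ _ (Finset.mem_univ j)]
  have h1 : ∑ x ∈ Finset.univ.erase j, (m - 1 - pref (stepC A j) x)
      = ∑ x ∈ Finset.univ.erase j, (m - 1 - pref A x) := by
    apply Finset.sum_congr rfl
    intro x hx
    rw [stepC_pref_ne A j x (Finset.ne_of_mem_erase hx)]
  rw [h1, stepC_pref A hm j hIns]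
  have hplt : pref A j < m - 1 := lt_of_le_of_ne (pref_le A j) hIns.2
  omega

lemma isFull_stepR (A : Cfg m n) (j : Fin n) (h : IsFull A j) : IsFull (stepR A) j := by
  unfold IsFull at *; rw [stepR_pref]; exact h

lemma isFull_stepC (A : Cfg m n) (hm : 2 ≤ m) (j' j : Fin n) (hIns : Insertable A j)
    (h : IsFull A j') : IsFull (stepC A j) j' := by
  unfold IsFull at *
  rcases eq_or_ne j' j with rfl | hne
  · exact absurd h hIns.2
  · rw [stepC_pref_ne A j j' hne]; exact h


-- ## Placed

def Placed (A : Cfg m n) (v : Fin (m * n)) : Prop :=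
  1 ≤ (A.symm v).1.val ∧ (A.symm v).1.val ≤ pref A (A.symm v).2

lemma placed_stepR (A : Cfg m n) (v : Fin (m * n)) (h : Placed A v) : Placed (stepR A) v := by
  obtain ⟨h1, h2⟩ := h
  have hne : (A.symm v).1 ≠ 0 := by
    intro h0; rw [h0] at h1; simp at h1
  unfold Placed
  rw [stepR_pos, rowRot_apply_ne _ _ hne, stepR_pref]
  exact ⟨h1, h2⟩

lemma placed_stepC (A : Cfg m n) (hm : 2 ≤ m) (j : Fin n) (hIns : Insertable A j)
    (v : Fin (m * n)) (h : Placed A v) : Placed (stepC A j) v := by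
  obtain ⟨h1, h2⟩ := h
  unfold Placed
  rw [stepC_pos]
  rcases eq_or_ne (A.symm v).2 j with hj | hj
  · have hpair : A.symm v = ((A.symm v).1, j) := by rw [← hj]
    rw [hpair, colRot_apply_eq]
    have hq : pref A j < m - 1 := lt_of_le_of_ne (pref_le A j) hIns.2
    rw [hj] at h2
    have hlt : (A.symm v).1.val + 1 < m := by omega
    have hval : (finRotate m (A.symm v).1).val = (A.symm v).1.val + 1 := by
      rw [fr_val]; exact Nat.mod_eq_of_lt hlt
    simp only [hval]
    rw [stepC_pref A hm j hIns]
    omega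
  · rw [colRot_apply_ne _ _ hj, stepC_pref_ne A j _ hj]
    exact ⟨h1, h2⟩

lemma inserted_placed (A : Cfg m n) (hm : 2 ≤ m) (j : Fin n) (hIns : Insertable A j)
    (v : Fin (m * n)) (h : A.symm v = (0, j)) : Placed (stepC A j) v := by
  unfold Placed
  rw [stepC_pos, h, colRot_apply_eq]
  have hval : (finRotate m (0 : Fin m)).val = 1 := by
    rw [fr_val]
    simp [Nat.mod_eq_of_lt (by omega : 1 < m)]
  simp only [hval]
  rw [stepC_pref A hm j hIns]
  omega

lemma insertable_Rm_pos (A : Cfg m n) {j : Fin n} (hIns : Insertable A j) : 1 ≤ Rm A := by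
  have hq : pref A j < m - 1 := lt_of_le_of_ne (pref_le A j) hIns.2
  have : 1 ≤ m - 1 - pref A j := by omega
  calc 1 ≤ m - 1 - pref A j := this
    _ ≤ Rm A := Finset.single_le_sum (f := fun j => m - 1 - pref A j)
        (fun _ _ => Nat.zero_le _) (Finset.mem_univ j)

-- counting row-0 cells satisfying an element predicate
noncomputable def cnt (A : Cfg m n) (P : Fin (m * n) → Prop) : ℕ :=
  (@Finset.filter _ (fun c => P (A (0, c))) (Classical.decPred _) Finset.univ).card

-- ## the scan: apply insertions until no column is insertable

lemma scan (hm : 2 ≤ m) : ∀ (N : ℕ) (A : Cfg m n), Rm A ≤ N →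
    ∃ (L : List (Equiv.Perm (Fin m × Fin n))) (B : Cfg m n),
      (∀ g ∈ L, g ∈ Set.range (colRot m n)) ∧
      applySeq A L = B ∧
      Rm B + L.length = Rm A ∧
      (∀ j, ¬ Insertable B j) ∧
      (∀ j, IsFull A j → IsFull B j) ∧
      (∀ v, Placed A v → Placed B v) ∧
      (∀ v c, A.symm v = (0, c) → (B.symm v = (0, c) ∨ Placed B v)) ∧
      (∀ P : Fin (m * n) → Prop, cnt B P + Rm B ≤ cnt A P + Rm A) := by
  intro N
  induction N with
  | zero =>
    intro A hA
    refine ⟨[], A, by simp, rfl, by simp, ?_, fun j h => h, fun v h => h,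
      fun v c h => Or.inl h, fun P => le_rfl⟩
    intro j hIns
    have := insertable_Rm_pos A hIns
    omega
  | succ N ih =>
    intro A hA
    by_cases h : ∃ j, Insertable A j
    · obtain ⟨j, hIns⟩ := h
      have hR1 : Rm (stepC A j) + 1 = Rm A := Rm_stepC A hm j hIns
      obtain ⟨L, B, hval, happ, hRm, hfix, hfull, hplaced, htrack, hcount⟩ :=
        ih (stepC A j) (by omega)
      refine ⟨colRot m n j :: L, B, ?_, ?_, ?_, hfix, ?_, ?_, ?_, ?_⟩
      · intro g hg
        rcases List.mem_cons.1 hg with rfl | hg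
        · exact ⟨j, rfl⟩
        · exact hval g hg
      · exact happ
      · simp only [List.length_cons]; omega
      · intro j' hf
        exact hfull j' (isFull_stepC A hm j' j hIns hf)
      · intro v hp
        exact hplaced v (placed_stepC A hm j hIns v hp)
      · intro v c hc
        rcases eq_or_ne c j with rfl | hne
        · exact Or.inr (hplaced v (inserted_placed A hm c hIns v hc))
        · apply htrack v c
          rw [stepC_pos, hc, colRot_apply_ne _ _ hne]
      · intro P
        have hsub : (@Finset.filter _ (fun c => P (stepC A j (0, c)))
              (Classical.decPred _) Finset.univ) ⊆
            insert j (@Finset.filter _ (fun c => P (A (0, c)))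
              (Classical.decPred _) Finset.univ) := by
          intro c hc
          rcases eq_or_ne c j with rfl | hne
          · exact Finset.mem_insert_self _ _
          · apply Finset.mem_insert_of_mem
            rw [Finset.mem_filter] at hc ⊢
            rw [stepC_content_ne A j 0 c hne] at hc
            exact ⟨Finset.mem_univ _, hc.2⟩
        have hcard : cnt (stepC A j) P ≤ cnt A P + 1 := by
          unfold cnt
          exact (Finset.card_le_card hsub).trans (Finset.card_insert_le _ _)
        have := hcount P
        omega
    · push_neg at h
      refine ⟨[], A, by simp, rfl, by simp, h, fun j hf => hf, fun v hp => hp,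
        fun v c hc => Or.inl hc, fun P => le_rfl⟩


-- ## one round: rotate row 0 once, then scan

lemma fr_add_one (c : Fin n) : finRotate n c = c + 1 := by
  obtain ⟨n', rfl⟩ := Nat.exists_eq_succ_of_ne_zero (NeZero.ne n)
  exact finRotate_succ_apply c

lemma applySeq_cons (A : Cfg m n) (g : Equiv.Perm (Fin m × Fin n)) (L) :
    applySeq A (g :: L) = applySeq (applyRot A g) L := rfl

lemma applySeq_append (A : Cfg m n) (L L') :
    applySeq A (L ++ L') = applySeq (applySeq A L) L' := List.foldl_append ..

lemma round (hm : 2 ≤ m) (A : Cfg m n) :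
    ∃ (L : List (Equiv.Perm (Fin m × Fin n))) (B : Cfg m n),
      (∀ g ∈ L, g ∈ unitRotations m n) ∧
      applySeq A L = B ∧
      Rm B + L.length = Rm A + 1 ∧
      (∀ j, ¬ Insertable B j) ∧
      (∀ j, IsFull A j → IsFull B j) ∧
      (∀ v, Placed A v → Placed B v) ∧
      (∀ v c, A.symm v = (0, c) → (B.symm v = (0, c + 1) ∨ Placed B v)) ∧
      (∀ P : Fin (m * n) → Prop, cnt B P + Rm B ≤ cnt A P + Rm A) := by
  obtain ⟨L, B, hval, happ, hRm, hfix, hfull, hplaced, htrack, hcount⟩ :=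
    scan hm (Rm (stepR A)) (stepR A) le_rfl
  refine ⟨rowRot m n 0 :: L, B, ?_, happ, ?_, hfix, ?_, ?_, ?_, ?_⟩
  · intro g hg
    rcases List.mem_cons.1 hg with rfl | hg
    · exact Or.inl ⟨0, rfl⟩
    · obtain ⟨j, hj⟩ := hval g hg
      exact Or.inr ⟨j, hj⟩
  · simp only [List.length_cons]
    rw [Rm_stepR] at hRm
    omega
  · intro j hf
    exact hfull j (isFull_stepR A j hf)
  · intro v hp
    exact hplaced v (placed_stepR A v hp)
  · intro v c hc
    have h1 : (stepR A).symm v = (0, c + 1) := by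
      rw [stepR_pos, hc, rowRot_apply_eq, fr_add_one]
    exact htrack v (c + 1) h1
  · intro P
    have hcard : cnt (stepR A) P = cnt A P := by
      unfold cnt
      apply Finset.card_equiv (finRotate n).symm
      intro c
      simp only [Finset.mem_filter, Finset.mem_univ, true_and]
      rw [stepR_content0]
    have := hcount P
    rw [hcard, Rm_stepR] at this
    exact this


-- ## counting helpers

def resCol (v : Fin (m * n)) : Fin n := ⟨v.val % n, Nat.mod_lt _ (NeZero.pos n)⟩

lemma fin_ne_zero_iff {k : ℕ} [NeZero k] (i : Fin k) : i ≠ 0 ↔ 1 ≤ i.val := by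
  constructor
  · intro h
    by_contra h2
    push_neg at h2
    exact h (Fin.ext (by simpa using Nat.lt_one_iff.1 h2))
  · intro h h0
    rw [h0] at h
    simp at h

lemma coverage (c₀ r : Fin n) : ∃ s : ℕ, 1 ≤ s ∧ s ≤ n ∧ c₀ + (s : Fin n) = r := by
  have hn1 : 1 ≤ n := NeZero.pos n
  rcases eq_or_ne r c₀ with rfl | hne
  · exact ⟨n, hn1, le_rfl, by rw [Fin.natCast_self, add_zero]⟩
  · refine ⟨(r - c₀).val, ?_, le_of_lt (r - c₀).isLt, ?_⟩
    · have h1 : r - c₀ ≠ 0 := sub_ne_zero.2 hne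
      rw [fin_ne_zero_iff] at h1
      exact h1
    · rw [Fin.cast_val_eq_self]
      abel

lemma resClass_card (r : Fin n) :
    (Finset.univ.filter fun v : Fin (m * n) => v.val % n = r.val).card = m := by
  have hn : 0 < n := NeZero.pos n
  have key : (Finset.univ.filter fun v : Fin (m * n) => v.val % n = r.val).card
      = (Finset.univ : Finset (Fin m)).card := by
    refine Finset.card_nbij' (fun v : Fin (m * n) => (⟨v.val / n, by
        rw [Nat.div_lt_iff_lt_mul hn]; have := v.isLt; omega⟩ : Fin m))
      (fun k : Fin m => (⟨r.val + k.val * n, by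
          have h1 : (k.val + 1) * n ≤ m * n := Nat.mul_le_mul_right _ (by have := k.isLt; omega)
          rw [add_mul, one_mul] at h1
          have := r.isLt
          omega⟩ : Fin (m * n))) ?_ ?_ ?_ ?_
    · intro v _
      exact Finset.mem_univ _
    · intro k _
      simp only [Finset.coe_filter, Finset.mem_coe, Set.mem_setOf_eq, Finset.mem_univ, true_and]
      rw [Nat.add_mul_mod_self_right, Nat.mod_eq_of_lt r.isLt]
    · intro v hv
      simp only [Finset.coe_filter, Finset.mem_coe, Set.mem_setOf_eq, Finset.mem_univ, true_and] at hv
      apply Fin.ext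
      simp only []
      rw [mul_comm, ← hv]
      exact Nat.mod_add_div v.val n
    · intro k _
      apply Fin.ext
      simp only []
      rw [Nat.add_mul_div_right _ _ hn, Nat.div_eq_of_lt r.isLt, zero_add]
  rw [key, Finset.card_univ, Fintype.card_fin]

lemma rowsGe1_card : (Finset.univ.filter fun i : Fin m => 1 ≤ i.val).card = m - 1 := by
  have h := Finset.card_filter_add_card_filter_not
    (s := (Finset.univ : Finset (Fin m))) (p := fun i : Fin m => 1 ≤ i.val)
  have h2 : (Finset.univ.filter fun i : Fin m => ¬ 1 ≤ i.val) = {0} := by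
    ext i
    simp only [Finset.mem_filter, Finset.mem_univ, true_and, Finset.mem_singleton]
    constructor
    · intro hi
      by_contra hne
      exact hi ((fin_ne_zero_iff i).1 hne)
    · intro hi
      rw [hi]
      simp
  rw [h2, Finset.card_singleton, Finset.card_univ, Fintype.card_fin] at h
  omega

lemma resCol_injOn (B : Cfg m n) {c c' : Fin n} (hcc : c ≠ c')
    {r : Fin n} (hr : (B (0, c)).val % n = r.val) (hr' : (B (0, c')).val % n = r.val)
    (hfull : IsFull B r) : False := by
  classical
  set T : Finset (Fin m × Fin n) :=
    (Finset.univ.filter fun i : Fin m => 1 ≤ i.val).image (fun i => (i, r)) with hT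
  have hmemT : ∀ p ∈ T, 1 ≤ p.1.val ∧ p.2 = r := by
    intro p hp
    rw [hT, Finset.mem_image] at hp
    obtain ⟨i, hi, rfl⟩ := hp
    simp only [Finset.mem_filter, Finset.mem_univ, true_and] at hi
    exact ⟨hi, rfl⟩
  have hnm1 : ((0 : Fin m), c) ∉ insert ((0 : Fin m), c') T := by
    intro h
    rcases Finset.mem_insert.1 h with h | h
    · exact hcc (by simpa using congrArg Prod.snd h)
    · have := (hmemT _ h).1
      simp at this
  have hnm2 : ((0 : Fin m), c') ∉ T := by
    intro h
    have := (hmemT _ h).1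
    simp at this
  set S : Finset (Fin m × Fin n) := insert ((0 : Fin m), c) (insert ((0 : Fin m), c') T)
    with hS
  have hcardT : T.card = m - 1 := by
    rw [hT, Finset.card_image_of_injective _ (fun a b h => by simpa using congrArg Prod.fst h),
      rowsGe1_card]
  have hcardS : S.card = m + 1 := by
    rw [hS, Finset.card_insert_of_notMem hnm1, Finset.card_insert_of_notMem hnm2, hcardT]
    have := NeZero.pos m
    omega
  have hle : S.card ≤ (Finset.univ.filter fun v : Fin (m * n) => v.val % n = r.val).card := by
    apply Finset.card_le_card_of_injOn (fun p => B p)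
    · rintro ⟨p1, p2⟩ hp
      simp only [Finset.coe_filter, Finset.mem_coe, Set.mem_setOf_eq, Finset.mem_univ, true_and]
      rw [hS] at hp
      rcases Finset.mem_insert.1 hp with heq | hp
      · rw [heq]; exact hr
      · rcases Finset.mem_insert.1 hp with heq | hp
        · rw [heq]; exact hr'
        · obtain ⟨h1, h2⟩ := hmemT _ hp
          simp only [] at h1 h2
          rw [← h2] at hfull ⊢
          exact (isFull_iff B p2).1 hfull p1 h1
    · exact Function.Injective.injOn B.injective
  rw [hcardS, resClass_card] at hle
  omega


def rowOrig (A0 : Cfg m n) (v : Fin (m * n)) : Prop := 1 ≤ (A0.symm v).1.val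

-- ## one loop: n rounds

lemma loop (hm : 2 ≤ m) (A0 : Cfg m n) :
    ∃ (L : List (Equiv.Perm (Fin m × Fin n))) (B : Cfg m n),
      (∀ g ∈ L, g ∈ unitRotations m n) ∧
      applySeq A0 L = B ∧
      Rm B + L.length ≤ Rm A0 + n ∧
      (∀ j, IsFull A0 j → IsFull B j) ∧
      m * Rm B ≤ (m - 1) * Rm A0 := by
  classical
  have hP0 : ∀ v, rowOrig A0 v ↔ 1 ≤ (A0.symm v).1.val := fun v => Iff.rfl
  have key : ∀ s : ℕ, ∃ (L : List (Equiv.Perm (Fin m × Fin n))) (B : Cfg m n),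
      (∀ g ∈ L, g ∈ unitRotations m n) ∧
      applySeq A0 L = B ∧
      Rm B + L.length ≤ Rm A0 + s ∧
      (∀ j, IsFull A0 j → IsFull B j) ∧
      (cnt B (rowOrig A0) + Rm B ≤ cnt A0 (rowOrig A0) + Rm A0) ∧
      (∀ v c₀, A0.symm v = (0, c₀) → (Placed B v ∨
        (B.symm v = (0, c₀ + (s : Fin n)) ∧
          ∀ s' : ℕ, 1 ≤ s' → s' ≤ s → (c₀ + (s' : Fin n)).val = v.val % n →
            IsFull B (c₀ + (s' : Fin n))))) := by
    intro s
    induction s with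
    | zero =>
      refine ⟨[], A0, by simp, rfl, by simp, fun j h => h, le_rfl, ?_⟩
      intro v c₀ h0
      right
      constructor
      · rw [h0]
        simp
      · intro s' h1 h2 _
        omega
    | succ s ih =>
      obtain ⟨L, B, hval, happ, hlen, hfull, hcount, hJ⟩ := ih
      obtain ⟨L', B', hval', happ', hlen', hfix', hfull', hplaced', htrack', hcount'⟩ :=
        round hm B
      have hcast : ((s + 1 : ℕ) : Fin n) = (s : Fin n) + 1 := Nat.cast_add_one s
      refine ⟨L ++ L', B', ?_, ?_, ?_, ?_, ?_, ?_⟩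
      · intro g hg
        rcases List.mem_append.1 hg with h | h
        · exact hval g h
        · exact hval' g h
      · rw [applySeq_append, happ, happ']
      · rw [List.length_append]
        omega
      · intro j h
        exact hfull' j (hfull j h)
      · exact le_trans (hcount' (rowOrig A0)) hcount
      · intro v c₀ h0
        rcases hJ v c₀ h0 with hp | ⟨hpos, hist⟩
        · exact Or.inl (hplaced' v hp)
        · rcases htrack' v _ hpos with hpos' | hp
          · right
            constructor
            · rw [hpos', hcast, add_assoc]
            · intro s' h1 h2 hres
              rcases Nat.lt_or_ge s' (s + 1) with hlt | hge
              · exact hfull' _ (hist s' h1 (by omega) hres)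
              · have hs' : s' = s + 1 := by omega
                subst hs'
                have hc : B'.symm v = (0, c₀ + ((s + 1 : ℕ) : Fin n)) := by
                  rw [hpos', hcast, add_assoc]
                have hgood : Good B' 0 (c₀ + ((s + 1 : ℕ) : Fin n)) := by
                  unfold Good
                  have hBv : B' (0, c₀ + ((s + 1 : ℕ) : Fin n)) = v := by
                    rw [← hc, Equiv.apply_symm_apply]
                  rw [hBv]
                  exact hres.symm
                have hni := hfix' (c₀ + ((s + 1 : ℕ) : Fin n))
                unfold Insertable at hni
                push_neg at hni
                exact hni hgood
          · exact Or.inl hp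
  obtain ⟨L, B, hval, happ, hlen, hfull, hcount, hJ⟩ := key n
  refine ⟨L, B, hval, happ, hlen, hfull, ?_⟩
  have hA0zero : cnt A0 (rowOrig A0) = 0 := by
    unfold cnt
    apply Finset.card_eq_zero.2
    apply Finset.eq_empty_of_forall_notMem
    intro c hc
    rw [Finset.mem_filter] at hc
    have hc2 := hc.2
    rw [hP0] at hc2
    simp at hc2
  rw [hA0zero, zero_add] at hcount
  set X : Finset (Fin n) := Finset.univ.filter
    (fun c => ¬ IsFull B (resCol (B (0, c)))) with hX
  set Y : Finset (Fin n) := Finset.univ.filter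
    (fun c => IsFull B (resCol (B (0, c)))) with hY
  have hXY : Y.card + X.card = n := by
    have h := Finset.card_filter_add_card_filter_not
      (s := (Finset.univ : Finset (Fin n))) (p := fun c => IsFull B (resCol (B (0, c))))
    rw [Finset.card_univ, Fintype.card_fin] at h
    rw [hX, hY]
    exact h
  have hXsub : X.card ≤ cnt B (rowOrig A0) := by
    unfold cnt
    apply Finset.card_le_card
    intro c hc
    rw [Finset.mem_filter]
    refine ⟨Finset.mem_univ _, ?_⟩
    rw [hX, Finset.mem_filter] at hc
    by_contra h0
    rw [hP0] at h0
    push_neg at h0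
    have h00 : (A0.symm (B (0, c))).1 = 0 := by
      apply Fin.ext
      simpa using h0
    have hA0v : A0.symm (B (0, c)) = (0, (A0.symm (B (0, c))).2) := by
      have heta := Prod.mk.eta (p := A0.symm (B (0, c)))
      rw [h00] at heta
      exact heta.symm
    rcases hJ (B (0, c)) _ hA0v with hp | ⟨hpos, hist⟩
    · have h1 := hp.1
      rw [Equiv.symm_apply_apply] at h1
      simp at h1
    · obtain ⟨s', hs1, hs2, hcov⟩ := coverage (A0.symm (B (0, c))).2 (resCol (B (0, c)))
      have hfoo := hist s' hs1 hs2 (by rw [hcov]; rfl)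
      rw [hcov] at hfoo
      exact hc.2 hfoo
  have hXle : X.card + Rm B ≤ Rm A0 :=
    le_trans (Nat.add_le_add_right hXsub _) hcount
  have hYle : Y.card ≤ (Finset.univ.filter fun j => IsFull B j).card := by
    apply Finset.card_le_card_of_injOn (fun c => resCol (B (0, c)))
    · intro c hc
      rw [hY, Finset.mem_coe, Finset.mem_filter] at hc
      exact Finset.mem_filter.2 ⟨Finset.mem_univ _, hc.2⟩
    · intro c hc c' hc' hrr
      by_contra hne
      rw [Finset.mem_coe, hY, Finset.mem_filter] at hc'
      have hrr' : resCol (B (0, c)) = resCol (B (0, c')) := hrr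
      exact resCol_injOn B hne (by rw [← hrr']; rfl) rfl hc'.2
  have hCnt := Finset.card_filter_add_card_filter_not
    (s := (Finset.univ : Finset (Fin n))) (p := fun j => IsFull B j)
  rw [Finset.card_univ, Fintype.card_fin] at hCnt
  have hRmB : Rm B ≤ (m - 1) * (Finset.univ.filter fun j => ¬ IsFull B j).card := by
    unfold Rm
    rw [← Finset.sum_filter_add_sum_filter_not Finset.univ (fun j => IsFull B j)]
    have hz : (∑ j ∈ Finset.univ.filter (fun j => IsFull B j), (m - 1 - pref B j)) = 0 := by
      apply Finset.sum_eq_zero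
      intro j hj
      rw [Finset.mem_filter] at hj
      have hfj := hj.2
      unfold IsFull at hfj
      omega
    rw [hz, zero_add]
    have hb := Finset.sum_le_card_nsmul (Finset.univ.filter fun j => ¬ IsFull B j)
      (fun j => m - 1 - pref B j) (m - 1)
      (fun x _ => by show m - 1 - pref B x ≤ m - 1; omega)
    rw [smul_eq_mul, mul_comm] at hb
    exact hb
  have h3 : (Finset.univ.filter fun j => ¬ IsFull B j).card ≤ X.card := by omega
  have h4 : Rm B ≤ (m - 1) * X.card := le_trans hRmB (Nat.mul_le_mul_left _ h3)
  have hb1 : m - 1 + 1 = m := by omega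
  calc m * Rm B = (m - 1) * Rm B + Rm B := by
        calc m * Rm B = (m - 1 + 1) * Rm B := by rw [hb1]
          _ = (m - 1) * Rm B + Rm B := by ring
    _ ≤ (m - 1) * Rm B + (m - 1) * X.card := Nat.add_le_add_left h4 _
    _ = (m - 1) * (Rm B + X.card) := by ring
    _ ≤ (m - 1) * Rm A0 := Nat.mul_le_mul_left _ (by omega)


-- ## iterating loops

lemma loops (hm : 2 ≤ m) : ∀ (T : ℕ) (A0 : Cfg m n),
    ∃ (L : List (Equiv.Perm (Fin m × Fin n))) (B : Cfg m n),
      (∀ g ∈ L, g ∈ unitRotations m n) ∧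
      applySeq A0 L = B ∧
      Rm B + L.length ≤ Rm A0 + T * n ∧
      m ^ T * Rm B ≤ (m - 1) ^ T * Rm A0 := by
  intro T
  induction T with
  | zero => exact fun A0 => ⟨[], A0, by simp, rfl, by simp, by simp⟩
  | succ T ih =>
    intro A0
    obtain ⟨L1, B1, h1v, h1a, h1l, h1p⟩ := ih A0
    obtain ⟨L2, B2, h2v, h2a, h2l, _, h2p⟩ := loop hm B1
    refine ⟨L1 ++ L2, B2, ?_, ?_, ?_, ?_⟩
    · intro g hg
      rcases List.mem_append.1 hg with h | h
      · exact h1v g h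
      · exact h2v g h
    · rw [applySeq_append, h1a, h2a]
    · rw [List.length_append]
      have he : (T + 1) * n = T * n + n := by ring
      omega
    · calc m ^ (T+1) * Rm B2 = m ^ T * (m * Rm B2) := by ring
        _ ≤ m ^ T * ((m - 1) * Rm B1) := Nat.mul_le_mul_left _ h2p
        _ = (m - 1) * (m ^ T * Rm B1) := by ring
        _ ≤ (m - 1) * ((m - 1) ^ T * Rm A0) := Nat.mul_le_mul_left _ h1p
        _ = (m - 1) ^ (T+1) * Rm A0 := by ring

lemma Rm_le (A : Cfg m n) : Rm A ≤ n * (m - 1) := by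
  unfold Rm
  have hb := Finset.sum_le_card_nsmul Finset.univ (fun j => m - 1 - pref A j) (m - 1)
    (fun x _ => by show m - 1 - pref A x ≤ m - 1; omega)
  rw [smul_eq_mul, Finset.card_univ, Fintype.card_fin] at hb
  exact hb

lemma Rm_zero_nearFull (A : Cfg m n) (h : Rm A = 0) (j : Fin n) : NearFull A j := by
  intro i hi
  have hterm : m - 1 - pref A j = 0 := by
    have := Finset.sum_eq_zero_iff.1 h j (Finset.mem_univ j)
    exact this
  have hfull : IsFull A j := le_antisymm (pref_le A j) (by omega)
  exact (isFull_iff A j).1 hfull i hi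

end

-- ## arithmetic helpers

lemma pow_succ_ge (a k : ℕ) : a ^ (k+1) + (k+1) * a ^ k ≤ (a+1) ^ (k+1) := by
  induction k with
  | zero => simp
  | succ k ih =>
    have h1 : (a+1) * (a ^ (k+1) + (k+1) * a ^ k)
        = a ^ (k+2) + (k+2) * a ^ (k+1) + (k+1) * a ^ k := by ring
    calc a ^ (k+2) + (k+2) * a ^ (k+1)
        ≤ (a+1) * (a ^ (k+1) + (k+1) * a ^ k) := by rw [h1]; exact Nat.le_add_right _ _
      _ ≤ (a+1) * (a+1) ^ (k+1) := Nat.mul_le_mul_left _ ih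
      _ = (a+1) ^ (k+2) := by ring

lemma two_mul_pow_le (a k : ℕ) (h : a ≤ k + 1) : 2 * a ^ (k+1) ≤ (a+1) ^ (k+1) := by
  have h1 := pow_succ_ge a k
  have h2 : a * a ^ k ≤ (k+1) * a ^ k := Nat.mul_le_mul_right _ (by omega)
  have h3 : 2 * a ^ (k+1) = a ^ (k+1) + a * a ^ k := by ring
  linarith

end FillCols

theorem fillColumns_bound :
    ∃ C : ℕ, 0 < C ∧ ∀ m n : ℕ, 2 ≤ m → m ≤ n →
      ∀ A : (Fin m × Fin n) ≃ Fin (m * n),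
        ∃ L : List (Equiv.Perm (Fin m × Fin n)),
          (∀ g ∈ L, g ∈ unitRotations m n) ∧
          L.length ≤ C * m * n * Nat.clog 2 n ∧
          ∀ j : Fin n, NearFull (applySeq A L) j := by
  refine ⟨4, by omega, ?_⟩
  intro m n hm hmn A
  haveI : NeZero m := ⟨by omega⟩
  haveI : NeZero n := ⟨by omega⟩
  have hn2 : 2 ≤ n := le_trans hm hmn
  set c := Nat.clog 2 n with hc
  have hc1 : 1 ≤ c := Nat.clog_pos (by norm_num) hn2
  set k := 2 * c + 1 with hk
  set T := m * k with hT
  obtain ⟨L, B, hval, happ, hlen, hpow⟩ := FillCols.loops hm T A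
  have hRB : FillCols.Rm B = 0 := by
    by_contra hne
    have hpos : 1 ≤ FillCols.Rm B := by omega
    have h1 : m ^ T ≤ m ^ T * FillCols.Rm B := Nat.le_mul_of_pos_right _ (by omega)
    have h2 : (m-1) ^ T * FillCols.Rm A ≤ (m-1) ^ T * (n * (m-1)) :=
      Nat.mul_le_mul_left _ (FillCols.Rm_le A)
    have hclog : n ≤ 2 ^ c := Nat.le_pow_clog (by norm_num) n
    have h3 : n * (m - 1) < 2 ^ k := by
      have e1 : n * (m - 1) < n * n :=
        mul_lt_mul_of_pos_left (by omega : m - 1 < n) (by omega : 0 < n)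
      have e2 : n * n ≤ 2 ^ c * 2 ^ c := Nat.mul_le_mul hclog hclog
      have e3 : 2 ^ c * 2 ^ c < 2 * (2 ^ c * 2 ^ c) := by
        have : 0 < 2 ^ c * 2 ^ c := by positivity
        omega
      have e4 : 2 ^ k = 2 * (2 ^ c * 2 ^ c) := by
        rw [hk, pow_succ, two_mul, pow_add]
        ring
      omega
    have h4 : (m - 1) ^ T * 2 ^ k ≤ m ^ T := by
      have hmm : m - 1 + 1 = m := by omega
      have hbase : 2 * (m - 1) ^ m ≤ m ^ m := by
        have := FillCols.two_mul_pow_le (m - 1) (m - 1) (by omega)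
        rw [hmm] at this
        exact this
      calc (m - 1) ^ T * 2 ^ k = (2 * (m - 1) ^ m) ^ k := by
            rw [hT, pow_mul, mul_pow]
            ring
        _ ≤ (m ^ m) ^ k := Nat.pow_le_pow_left hbase k
        _ = m ^ T := by rw [hT, pow_mul]
    have h5 : (m - 1) ^ T * (n * (m - 1)) < (m - 1) ^ T * 2 ^ k := by
      have hp : 0 < (m - 1) ^ T := pow_pos (by omega : 0 < m - 1) T
      exact mul_lt_mul_of_pos_left h3 hp
    have := lt_of_le_of_lt (le_trans h1 (le_trans hpow h2)) (lt_of_lt_of_le h5 h4)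
    exact lt_irrefl _ this
  refine ⟨L, hval, ?_, ?_⟩
  · have hRmA : FillCols.Rm A ≤ n * (m - 1) := FillCols.Rm_le A
    have hlen2 : L.length ≤ n * (m - 1) + T * n := by omega
    have hfinal : n * (m - 1) + T * n ≤ 4 * m * n * c := by
      have e1 : n * (m - 1) ≤ m * n := by
        calc n * (m - 1) ≤ n * m := Nat.mul_le_mul_left _ (by omega)
          _ = m * n := by ring
      have e2 : T * n = 2 * (m * n * c) + m * n := by
        rw [hT, hk]; ring
      have e3 : m * n ≤ m * n * c := Nat.le_mul_of_pos_right _ (by omega)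
      have e4 : 4 * m * n * c = 4 * (m * n * c) := by ring
      omega
    omega
  · intro j
    rw [happ]
    exact FillCols.Rm_zero_nearFull B hRB j
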